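/- arXiv:2012.14001 — 2 statements merged into one kernel-verified Lean document; each statement's English description precedes it below -/
import Mathlib

section
/- Let S be a unital star-subalgebra of Matrix n n ℂ, let ρ ∈ Matrix n n ℂ be positive definite with Tr ρ = 1, and let ρ_C ∈ S be positive definite with Tr(ρ_C * c) = Tr(ρ * c) for all c ∈ S. If there exists a ρ-preserving conditional expectation from Matrix n n ℂ onto S, then ρ^{1/2} * c * ρ^{-1/2} = ρ_C^{1/2} * c * ρ_C^{-1/2} for every c ∈ S. -/
open Matrix
open scoped ComplexOrder

/-- A linear map between complex matrix algebras is completely positive if for every `k ≥ 1`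
its blockwise application to `k × k` block matrices sends positive semidefinite matrices to
positive semidefinite matrices. -/
def IsCP {n m : Type*} [Fintype n] [Fintype m]
    (Φ : Matrix n n ℂ → Matrix m m ℂ) : Prop :=
  ∀ (k : ℕ) (M : Matrix (n × Fin k) (n × Fin k) ℂ), M.PosSemidef →
    (Matrix.of fun p q : m × Fin k =>
      Φ (Matrix.of fun i j => M (i, p.2) (j, q.2)) p.1 q.1).PosSemidef

/-- A conditional expectation onto a unital star-subalgebra `S` (given by its carrier set)
is a unital completely positive linear map with range inside `S`, fixing every element of
`S`, and satisfying the `S`-bimodule property. -/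
def IsCondExpOn {d : Type*} [Fintype d] [DecidableEq d] (S : Set (Matrix d d ℂ))
    (E : Matrix d d ℂ → Matrix d d ℂ) : Prop :=
  (∀ x y, E (x + y) = E x + E y) ∧
  (∀ (z : ℂ) (x : Matrix d d ℂ), E (z • x) = z • E x) ∧
  E 1 = 1 ∧
  IsCP E ∧
  (∀ x, E x ∈ S) ∧
  (∀ c ∈ S, E c = c) ∧
  (∀ c₁ ∈ S, ∀ c₂ ∈ S, ∀ x, E (c₁ * x * c₂) = c₁ * E x * c₂)

/-- The positive semidefinite square root of a positive semidefinite matrix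
(the definition of `Matrix.PosSemidef.sqrt` in the older Mathlib). -/
noncomputable def Matrix.PosSemidef.sqrt {n 𝕜 : Type*} [Fintype n] [RCLike 𝕜] [DecidableEq n]
    {A : Matrix n n 𝕜} (hA : A.PosSemidef) : Matrix n n 𝕜 :=
  hA.1.eigenvectorUnitary.1 * diagonal ((↑) ∘ (√·) ∘ hA.1.eigenvalues) *
  (star hA.1.eigenvectorUnitary : Matrix n n 𝕜)

section AuxLemmas

variable {N : Type*} [Fintype N] [DecidableEq N]


variable {N : Type*} [Fintype N] [DecidableEq N]

lemma Matrix.PosSemidef.my_sqrt_eq_cfc {A : Matrix N N ℂ} (hA : A.PosSemidef) :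
    hA.sqrt = cfc Real.sqrt A := by
  rw [hA.1.cfc_eq]; rfl

lemma Matrix.PosSemidef.my_spec_nonneg {A : Matrix N N ℂ} (hA : A.PosSemidef) :
    ∀ x ∈ spectrum ℝ A, 0 ≤ x := by
  intro x hx
  obtain ⟨i, rfl⟩ := hA.1.spectrum_real_eq_range_eigenvalues ▸ hx
  exact hA.eigenvalues_nonneg i

lemma Matrix.PosSemidef.sqrt_mul_self {A : Matrix N N ℂ} (hA : A.PosSemidef) :
    hA.sqrt * hA.sqrt = A := by
  have hsa : IsSelfAdjoint A := hA.1.isSelfAdjoint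
  rw [hA.my_sqrt_eq_cfc, ← cfc_mul Real.sqrt Real.sqrt A]
  conv_rhs => rw [← cfc_id' ℝ A]
  refine cfc_congr fun x hx => ?_
  exact Real.mul_self_sqrt (hA.my_spec_nonneg x hx)

lemma Matrix.PosSemidef.posSemidef_sqrt {A : Matrix N N ℂ} (hA : A.PosSemidef) :
    hA.sqrt.PosSemidef := by
  apply PosSemidef.mul_mul_conjTranspose_same
  refine posSemidef_diagonal_iff.mpr fun i => ?_
  simp only [Function.comp_apply]
  exact Complex.zero_le_real.mpr (Real.sqrt_nonneg _)

lemma Matrix.PosSemidef.sqrt_sq {A : Matrix N N ℂ} (hA : A.PosSemidef) :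
    (hA.pow 2 : PosSemidef (A ^ 2)).sqrt = A := by
  have hsa : IsSelfAdjoint A := hA.1.isSelfAdjoint
  rw [Matrix.PosSemidef.my_sqrt_eq_cfc, ← cfc_comp_pow Real.sqrt 2 A]
  conv_rhs => rw [← cfc_id' ℝ A]
  refine cfc_congr fun x hx => ?_
  exact Real.sqrt_sq (hA.my_spec_nonneg x hx)

/-- A matrix commuting with a psd matrix commutes with its square root. -/
lemma my_commute_sqrt {A B : Matrix N N ℂ} (hA : A.PosSemidef)
    (h : A * B = B * A) : hA.sqrt * B = B * hA.sqrt := by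
  set U : Matrix N N ℂ := hA.1.eigenvectorUnitary.1 with hU
  have h1 : U * star U = 1 := Matrix.mem_unitaryGroup_iff.mp hA.1.eigenvectorUnitary.2
  have h2 : star U * U = 1 := Matrix.mem_unitaryGroup_iff'.mp hA.1.eigenvectorUnitary.2
  set ev := hA.1.eigenvalues with hev
  set B' : Matrix N N ℂ := star U * B * U with hB'
  have hspec : A = U * diagonal ((↑) ∘ ev) * star U := hA.1.spectral_theorem
  have key : diagonal ((↑) ∘ ev) * B' = B' * diagonal ((↑) ∘ ev) := by
    have := congrArg (fun X => star U * X * U) h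
    simp only [hspec, Matrix.mul_assoc] at this ⊢
    rw [h2] at this
    simp only [Matrix.mul_one, ← Matrix.mul_assoc, h2, Matrix.one_mul] at this
    simp only [hB', Matrix.mul_assoc] at this ⊢
    exact this
  have key2 : ∀ i j, ((Real.sqrt (ev i) : ℂ)) * B' i j = B' i j * (Real.sqrt (ev j) : ℂ) := by
    intro i j
    have hk : ((ev i : ℂ)) * B' i j = B' i j * (ev j : ℂ) := by
      have := congrFun (congrFun key i) j
      simpa [Matrix.diagonal_mul, Matrix.mul_diagonal] using this
    rcases eq_or_ne (B' i j) 0 with h0 | h0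
    · simp [h0]
    · have hij : (ev i : ℂ) = (ev j : ℂ) := by
        have : (B' i j) * ((ev i : ℂ) - (ev j : ℂ)) = 0 := by
          rw [mul_sub, sub_eq_zero, mul_comm]; exact hk
        rcases mul_eq_zero.mp this with h' | h'
        · exact absurd h' h0
        · exact sub_eq_zero.mp h'
      have : ev i = ev j := by exact_mod_cast hij
      rw [this, mul_comm]
  have keyD : diagonal ((↑) ∘ Real.sqrt ∘ ev) * B' = B' * diagonal ((↑) ∘ Real.sqrt ∘ ev) := by
    ext i j
    simpa [Matrix.diagonal_mul, Matrix.mul_diagonal] using key2 i j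
  have hsq : hA.sqrt = U * diagonal ((↑) ∘ Real.sqrt ∘ ev) * star U := rfl
  rw [hsq]
  calc U * diagonal ((↑) ∘ Real.sqrt ∘ ev) * star U * B
      = U * diagonal ((↑) ∘ Real.sqrt ∘ ev) * (star U * B * U) * star U := by
        simp only [Matrix.mul_assoc, h1, Matrix.mul_one]
    _ = U * (diagonal ((↑) ∘ Real.sqrt ∘ ev) * B') * star U := by
        simp only [Matrix.mul_assoc, hB']
    _ = U * (B' * diagonal ((↑) ∘ Real.sqrt ∘ ev)) * star U := by rw [keyD]
    _ = (U * (star U * B * U)) * diagonal ((↑) ∘ Real.sqrt ∘ ev) * star U := by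
        simp only [Matrix.mul_assoc, hB']
    _ = B * (U * diagonal ((↑) ∘ Real.sqrt ∘ ev) * star U) := by
        simp only [← Matrix.mul_assoc, h1, Matrix.one_mul]

omit [DecidableEq N] in
lemma my_trace_conj_zero {w : Matrix N N ℂ} (h : (wᴴ * w).trace = 0) : w = 0 := by
  have hdiag : ∀ j, (wᴴ * w) j j = dotProduct (star fun i => w i j) (fun i => w i j) := by
    intro j
    simp [Matrix.mul_apply, Matrix.conjTranspose_apply, dotProduct]
  have hnn : ∀ j ∈ Finset.univ, (0:ℂ) ≤ (wᴴ * w) j j := fun j _ => by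
    rw [hdiag j]; exact dotProduct_star_self_nonneg _
  have hzero : ∀ j ∈ Finset.univ, (wᴴ * w) j j = 0 :=
    (Finset.sum_eq_zero_iff_of_nonneg hnn).mp h
  ext i j
  have := hzero j (Finset.mem_univ j)
  rw [hdiag j] at this
  have := dotProduct_star_self_eq_zero.mp this
  simpa using congrFun this i

lemma my_trace_rho_zero {ρ z : Matrix N N ℂ} (hρ : ρ.PosDef)
    (h : (ρ * (zᴴ * z)).trace = 0) : z = 0 := by
  set s := hρ.posSemidef.sqrt with hsdef
  have hs : s * s = ρ := hρ.posSemidef.sqrt_mul_self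
  have hsH : sᴴ = s := hρ.posSemidef.posSemidef_sqrt.1
  have hdet : IsUnit s.det := by
    have h1 : s.det * s.det = ρ.det := by rw [← Matrix.det_mul, hs]
    have h2 : ρ.det ≠ 0 := hρ.det_pos.ne'
    refine isUnit_iff_ne_zero.mpr fun h0 => h2 ?_
    rw [← h1, h0, mul_zero]
  have key : ((z * s)ᴴ * (z * s)).trace = 0 := by
    have e : (z * s)ᴴ * (z * s) = s * (zᴴ * z) * s := by
      rw [Matrix.conjTranspose_mul, hsH]; simp [Matrix.mul_assoc]
    rw [e, Matrix.trace_mul_cycle, hs]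
    exact h
  have hz : z * s = 0 := my_trace_conj_zero key
  have := congrArg (fun X => X * s⁻¹) hz
  simpa [Matrix.mul_assoc, Matrix.mul_nonsing_inv s hdet] using this

lemma my_inv_mem {n : ℕ} (S : StarSubalgebra ℂ (Matrix (Fin n) (Fin n) ℂ))
    {a : Matrix (Fin n) (Fin n) ℂ} (ha : a ∈ S) (hdet : IsUnit a.det) : a⁻¹ ∈ S := by
  have haev : ∀ q : Polynomial ℂ, Polynomial.aeval a q ∈ S := by
    intro q
    induction q using Polynomial.induction_on' with
    | add p q hp hq => rw [map_add]; exact add_mem hp hq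
    | monomial k c =>
        rw [Polynomial.aeval_monomial]
        exact mul_mem (S.algebraMap_mem c) (pow_mem ha k)
  have hch := Matrix.aeval_self_charpoly a
  set p := a.charpoly with hp
  have hp0 : p.coeff 0 ≠ 0 := by
    intro h0
    have := Matrix.det_eq_sign_charpoly_coeff a
    rw [h0, mul_zero] at this
    exact (isUnit_iff_ne_zero.mp hdet) this
  have key : a * Polynomial.aeval a p.divX = -(p.coeff 0) • (1 : Matrix (Fin n) (Fin n) ℂ) := by
    have h1 := Polynomial.X_mul_divX_add (p := p)
    have h2 := congrArg (Polynomial.aeval a) h1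
    rw [map_add, _root_.map_mul, Polynomial.aeval_X, Polynomial.aeval_C, hch,
      Algebra.algebraMap_eq_smul_one] at h2
    have := congrArg (fun X => X - (p.coeff 0) • (1 : Matrix (Fin n) (Fin n) ℂ)) h2
    simp only [add_sub_cancel_right, zero_sub] at this
    rw [this, neg_smul]
  have hunit : a * ((-(p.coeff 0))⁻¹ • Polynomial.aeval a p.divX) = 1 := by
    rw [Matrix.mul_smul, key, smul_smul, inv_mul_cancel₀ (by simpa using hp0), one_smul]
  rw [Matrix.inv_eq_right_inv hunit]
  exact SMulMemClass.smul_mem _ (haev _)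

end AuxLemmas

/-- If a `ρ`-preserving conditional expectation onto `S` exists, then
`ρ^{1/2} c ρ^{-1/2} = ρ_C^{1/2} c ρ_C^{-1/2}` for every `c ∈ S`, where `ρ_C ∈ S`
is the restriction of `ρ` to `S`. -/
theorem rho_preserving_condExp_imp_modular_eq
    {n : ℕ} (S : StarSubalgebra ℂ (Matrix (Fin n) (Fin n) ℂ))
    (ρ : Matrix (Fin n) (Fin n) ℂ) (hρ : ρ.PosDef) (hρtr : ρ.trace = 1)
    (ρC : Matrix (Fin n) (Fin n) ℂ) (hρCS : ρC ∈ S) (hρC : ρC.PosDef)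
    (hρCtr : ∀ c ∈ S, (ρC * c).trace = (ρ * c).trace)
    (hE : ∃ E : Matrix (Fin n) (Fin n) ℂ → Matrix (Fin n) (Fin n) ℂ,
        IsCondExpOn (S : Set (Matrix (Fin n) (Fin n) ℂ)) E ∧
        ∀ x, (ρ * E x).trace = (ρ * x).trace) :
    ∀ c ∈ S,
      (Matrix.PosSemidef.sqrt hρ.posSemidef) * c * ((Matrix.PosSemidef.sqrt hρ.posSemidef))⁻¹ =
        (Matrix.PosSemidef.sqrt hρC.posSemidef) * c * ((Matrix.PosSemidef.sqrt hρC.posSemidef))⁻¹ := by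
  obtain ⟨E, hCE, hpres⟩ := hE
  obtain ⟨hadd, hsmul, -, -, hmem, hfix, hbim⟩ := hCE
  have hρdet : IsUnit ρ.det := isUnit_iff_ne_zero.mpr hρ.det_pos.ne'
  have hρCdet : IsUnit ρC.det := isUnit_iff_ne_zero.mpr hρC.det_pos.ne'
  have hρinv : ρ * ρ⁻¹ = 1 := Matrix.mul_nonsing_inv _ hρdet
  have hinvρ : ρ⁻¹ * ρ = 1 := Matrix.nonsing_inv_mul _ hρdet
  have hρCinv : ρC * ρC⁻¹ = 1 := Matrix.mul_nonsing_inv _ hρCdet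
  have hinvρC : ρC⁻¹ * ρC = 1 := Matrix.nonsing_inv_mul _ hρCdet
  have hρCinvS : ρC⁻¹ ∈ S := my_inv_mem S hρCS hρCdet
  -- E facts
  have hEl : ∀ s ∈ S, ∀ x, E (s * x) = s * E x := by
    intro s hs x
    have := hbim s hs 1 (one_mem S) x
    simpa using this
  have hEr : ∀ s ∈ S, ∀ x, E (x * s) = E x * s := by
    intro s hs x
    have := hbim 1 (one_mem S) s hs x
    simpa using this
  have hker1 : ∀ z, E z = 0 → ∀ s ∈ S, (ρ * (s * z)).trace = 0 := by
    intro z hz s hs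
    rw [← hpres (s * z), hEl s hs z, hz, mul_zero, Matrix.mul_zero, Matrix.trace_zero]
  have hker2 : ∀ z, E z = 0 → ∀ s ∈ S, (ρ * (z * s)).trace = 0 := by
    intro z hz s hs
    rw [← hpres (z * s), hEr s hs z, hz, zero_mul, Matrix.mul_zero, Matrix.trace_zero]
  have hEsub : ∀ a b, E (a - b) = E a - E b := by
    intro a b
    have h1 : a - b = a + (-1 : ℂ) • b := by
      rw [neg_one_smul, ← sub_eq_add_neg]
    rw [h1, hadd, hsmul, neg_one_smul, ← sub_eq_add_neg]
  -- Claim A : S is invariant under conjugation by ρ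
  have claimA : ∀ c ∈ S, ρ * c * ρ⁻¹ ∈ S := by
    intro c hc
    set x := ρ * c * ρ⁻¹ with hx
    set z := x - E x with hzdef
    have hEz : E z = 0 := by
      rw [hzdef, hEsub, hfix _ (hmem x), sub_self]
    have hz0 : z = 0 := by
      apply my_trace_rho_zero hρ
      have hxH : xᴴ = ρ⁻¹ * (cᴴ * ρ) := by
        rw [hx, Matrix.conjTranspose_mul, Matrix.conjTranspose_mul,
          Matrix.conjTranspose_nonsing_inv, hρ.isHermitian.eq]
      have expand : ρ * (zᴴ * z) = ρ * (xᴴ * z) - ρ * ((E x)ᴴ * z) := by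
        rw [hzdef, Matrix.conjTranspose_sub, Matrix.sub_mul, Matrix.mul_sub]
      rw [expand, Matrix.trace_sub]
      have hExS : (E x)ᴴ ∈ S := star_mem (hmem x)
      have t2 : (ρ * ((E x)ᴴ * z)).trace = 0 := hker1 z hEz _ hExS
      have t1 : (ρ * (xᴴ * z)).trace = 0 := by
        rw [hxH]
        have e1 : ρ * (ρ⁻¹ * (cᴴ * ρ) * z) = cᴴ * ρ * z := by
          simp only [← Matrix.mul_assoc]
          rw [hρinv, Matrix.one_mul]
        rw [e1, Matrix.trace_mul_cycle, Matrix.trace_mul_comm]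
        exact hker2 z hEz _ (star_mem hc)
      rw [t1, t2, sub_zero]
    have hxE : x = E x := sub_eq_zero.mp hz0
    have := hmem x
    rwa [← hxE] at this
  -- the key identity (★)
  have hstar : ∀ c ∈ S, ρ * c * ρ⁻¹ = ρC * c * ρC⁻¹ := by
    intro c hc
    set u := ρ * c * ρ⁻¹ - ρC * c * ρC⁻¹ with hu
    have huS : u ∈ S := sub_mem (claimA c hc) (mul_mem (mul_mem hρCS hc) hρCinvS)
    have huHS : uᴴ ∈ S := star_mem huS
    have hu0 : u = 0 := by
      apply my_trace_rho_zero hρ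
      have expand : ρ * (uᴴ * u) =
          ρ * (uᴴ * (ρ * c * ρ⁻¹)) - ρ * (uᴴ * (ρC * c * ρC⁻¹)) := by
        rw [hu, Matrix.mul_sub, Matrix.mul_sub]
      rw [expand, Matrix.trace_sub]
      have t1 : (ρ * (uᴴ * (ρ * c * ρ⁻¹))).trace = (uᴴ * (ρC * c)).trace := by
        calc (ρ * (uᴴ * (ρ * c * ρ⁻¹))).trace
            = ((ρ * uᴴ * ρ * c) * ρ⁻¹).trace := by
              rw [show ρ * (uᴴ * (ρ * c * ρ⁻¹)) = (ρ * uᴴ * ρ * c) * ρ⁻¹ by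
                simp only [Matrix.mul_assoc]]
          _ = (ρ⁻¹ * (ρ * uᴴ * ρ * c)).trace := Matrix.trace_mul_comm _ _
          _ = ((uᴴ * ρ) * c).trace := by
              rw [show ρ⁻¹ * (ρ * uᴴ * ρ * c) = (uᴴ * ρ) * c by
                simp only [← Matrix.mul_assoc]
                rw [hinvρ, Matrix.one_mul]]
          _ = (c * (uᴴ * ρ)).trace := Matrix.trace_mul_comm _ _
          _ = ((c * uᴴ) * ρ).trace := by rw [Matrix.mul_assoc]
          _ = (ρ * (c * uᴴ)).trace := Matrix.trace_mul_comm _ _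
          _ = (ρC * (c * uᴴ)).trace := (hρCtr _ (mul_mem hc huHS)).symm
          _ = ((c * uᴴ) * ρC).trace := Matrix.trace_mul_comm _ _
          _ = (c * (uᴴ * ρC)).trace := by rw [Matrix.mul_assoc]
          _ = ((uᴴ * ρC) * c).trace := Matrix.trace_mul_comm _ _
          _ = (uᴴ * (ρC * c)).trace := by rw [Matrix.mul_assoc]
      have t2 : (ρ * (uᴴ * (ρC * c * ρC⁻¹))).trace = (uᴴ * (ρC * c)).trace := by
        have hXS : uᴴ * (ρC * c * ρC⁻¹) ∈ S :=
          mul_mem huHS (mul_mem (mul_mem hρCS hc) hρCinvS)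
        calc (ρ * (uᴴ * (ρC * c * ρC⁻¹))).trace
            = (ρC * (uᴴ * (ρC * c * ρC⁻¹))).trace := (hρCtr _ hXS).symm
          _ = ((ρC * uᴴ * ρC * c) * ρC⁻¹).trace := by
              rw [show ρC * (uᴴ * (ρC * c * ρC⁻¹)) = (ρC * uᴴ * ρC * c) * ρC⁻¹ by
                simp only [Matrix.mul_assoc]]
          _ = (ρC⁻¹ * (ρC * uᴴ * ρC * c)).trace := Matrix.trace_mul_comm _ _
          _ = ((uᴴ * ρC) * c).trace := by
              rw [show ρC⁻¹ * (ρC * uᴴ * ρC * c) = (uᴴ * ρC) * c by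
                simp only [← Matrix.mul_assoc]
                rw [hinvρC, Matrix.one_mul]]
          _ = (uᴴ * (ρC * c)).trace := by rw [Matrix.mul_assoc]
      rw [t1, t2, sub_self]
    exact sub_eq_zero.mp hu0
  -- ρ and ρC commute
  have hcomm : ρ * ρC = ρC * ρ := by
    have h1 := hstar ρC hρCS
    have h2 : ρC * ρC * ρC⁻¹ = ρC := by rw [Matrix.mul_assoc, hρCinv, Matrix.mul_one]
    rw [h2] at h1
    calc ρ * ρC = ρ * ρC * ρ⁻¹ * ρ := by rw [Matrix.mul_assoc (ρ * ρC), hinvρ, Matrix.mul_one]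
      _ = ρC * ρ := by rw [h1]
  -- final assembly
  intro c hc
  set s := hρ.posSemidef.sqrt with hsdef
  set t := hρC.posSemidef.sqrt with htdef
  have hss : s * s = ρ := hρ.posSemidef.sqrt_mul_self
  have htt : t * t = ρC := hρC.posSemidef.sqrt_mul_self
  have htH : tᴴ = t := hρC.posSemidef.posSemidef_sqrt.1
  have hsdet : IsUnit s.det := by
    refine isUnit_iff_ne_zero.mpr fun h0 => (isUnit_iff_ne_zero.mp hρdet) ?_
    rw [← hss, Matrix.det_mul, h0, mul_zero]
  have htdet : IsUnit t.det := by
    refine isUnit_iff_ne_zero.mpr fun h0 => (isUnit_iff_ne_zero.mp hρCdet) ?_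
    rw [← htt, Matrix.det_mul, h0, mul_zero]
  have hsinv : s * s⁻¹ = 1 := Matrix.mul_nonsing_inv _ hsdet
  have htinv : t * t⁻¹ = 1 := Matrix.mul_nonsing_inv _ htdet
  have hinvt : t⁻¹ * t = 1 := Matrix.nonsing_inv_mul _ htdet
  -- s and t commute
  have hcs : s * ρC = ρC * s := my_commute_sqrt hρ.posSemidef hcomm
  have hts : t * s = s * t := my_commute_sqrt hρC.posSemidef hcs.symm
  have htinv_s : t⁻¹ * s = s * t⁻¹ := by
    calc t⁻¹ * s = t⁻¹ * (s * t) * t⁻¹ := by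
          rw [Matrix.mul_assoc, Matrix.mul_assoc, htinv, Matrix.mul_one]
      _ = t⁻¹ * (t * s) * t⁻¹ := by rw [hts]
      _ = s * t⁻¹ := by
          simp only [← Matrix.mul_assoc]
          rw [hinvt, Matrix.one_mul]
  -- D commutes with c
  have hD : (ρC⁻¹ * ρ) * c = c * (ρC⁻¹ * ρ) := by
    have h1 := hstar c hc
    calc ρC⁻¹ * ρ * c = ρC⁻¹ * (ρ * c * ρ⁻¹) * ρ := by
          simp only [Matrix.mul_assoc]
          rw [show ρ⁻¹ * ρ = 1 from hinvρ, Matrix.mul_one]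
      _ = ρC⁻¹ * (ρC * c * ρC⁻¹) * ρ := by rw [h1]
      _ = c * (ρC⁻¹ * ρ) := by
          simp only [← Matrix.mul_assoc]
          rw [hinvρC, Matrix.one_mul]
  -- t⁻¹ is psd
  have htinvH : (t⁻¹)ᴴ = t⁻¹ := by rw [Matrix.conjTranspose_nonsing_inv, htH]
  have htinvpsd : (t⁻¹).PosSemidef := by
    have h1 := hρC.posSemidef.posSemidef_sqrt.conjTranspose_mul_mul_same (t⁻¹)
    rw [htinvH] at h1
    rwa [show t⁻¹ * t * t⁻¹ = t⁻¹ by rw [hinvt, Matrix.one_mul]] at h1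
  -- m = t⁻¹ * s is psd
  have hmpsd : (t⁻¹ * s).PosSemidef := by
    have hr := my_commute_sqrt htinvpsd htinv_s
    set r := htinvpsd.sqrt with hrdef
    have hrH : rᴴ = r := htinvpsd.posSemidef_sqrt.1
    have e : t⁻¹ * s = r * s * rᴴ := by
      rw [hrH]
      calc t⁻¹ * s = (r * r) * s := by rw [htinvpsd.sqrt_mul_self]
        _ = r * (r * s) := by rw [Matrix.mul_assoc]
        _ = r * (s * r) := by rw [hr]
        _ = r * s * r := by rw [Matrix.mul_assoc]
    rw [e]
    exact hρ.posSemidef.posSemidef_sqrt.mul_mul_conjTranspose_same r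
  -- m squared is D
  have hm2 : (t⁻¹ * s) * (t⁻¹ * s) = ρC⁻¹ * ρ := by
    calc (t⁻¹ * s) * (t⁻¹ * s) = t⁻¹ * (s * t⁻¹) * s := by simp only [Matrix.mul_assoc]
      _ = t⁻¹ * (t⁻¹ * s) * s := by rw [← htinv_s]
      _ = (t⁻¹ * t⁻¹) * (s * s) := by simp only [Matrix.mul_assoc]
      _ = ρC⁻¹ * ρ := by rw [hss, ← Matrix.mul_inv_rev, htt]
  -- c commutes with m
  have hmc : (t⁻¹ * s) * c = c * (t⁻¹ * s) := by
    have hpow : ((t⁻¹ * s) ^ 2).PosSemidef := hmpsd.pow 2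
    have hD2 : ((t⁻¹ * s) ^ 2) * c = c * ((t⁻¹ * s) ^ 2) := by
      rw [pow_two, hm2]; exact hD
    have h1 := my_commute_sqrt hpow hD2
    rwa [hmpsd.sqrt_sq] at h1
  -- conclude
  calc s * c * s⁻¹ = t * (t⁻¹ * s * c) * s⁻¹ := by
        simp only [← Matrix.mul_assoc]
        rw [htinv, Matrix.one_mul]
    _ = t * (c * (t⁻¹ * s)) * s⁻¹ := by rw [hmc]
    _ = t * c * t⁻¹ * (s * s⁻¹) := by simp only [Matrix.mul_assoc]
    _ = t * c * t⁻¹ := by rw [hsinv, Matrix.mul_one]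
end

section
/- Let S be a unital star-subalgebra of Matrix n n ℂ, let ρ ∈ Matrix n n ℂ be positive definite with Tr ρ = 1, and let ρ_C ∈ S be positive definite with Tr(ρ_C * c) = Tr(ρ * c) for all c ∈ S. If ρ^{1/2} * c * ρ^{-1/2} = ρ_C^{1/2} * c * ρ_C^{-1/2} for every c ∈ S, then there exists a ρ-preserving conditional expectation from Matrix n n ℂ onto S. -/
open Matrix Polynomial
open scoped ComplexOrder

namespace TakesakiAux

set_option linter.unusedSectionVars false

variable {m : Type*} [Fintype m] [DecidableEq m]

lemma trace_conjTranspose_mul (A B : Matrix m m ℂ) :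
    (Aᴴ * B).trace = ∑ i, ∑ j, star (A i j) * B i j := by
  rw [Finset.sum_comm]
  simp [Matrix.trace, Matrix.mul_apply, Matrix.diag, Matrix.conjTranspose_apply]

lemma trace_conjTranspose_mul_self_nonneg (A : Matrix m m ℂ) :
    0 ≤ (Aᴴ * A).trace := by
  rw [trace_conjTranspose_mul]
  exact Finset.sum_nonneg fun i _ => Finset.sum_nonneg fun j _ => star_mul_self_nonneg _

lemma eq_zero_of_trace_conjTranspose_mul_self {A : Matrix m m ℂ}
    (h : (Aᴴ * A).trace = 0) : A = 0 := by
  rw [trace_conjTranspose_mul] at h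
  have h1 : ∀ i ∈ Finset.univ, (0:ℂ) ≤ ∑ j, star (A i j) * A i j :=
    fun i _ => Finset.sum_nonneg fun j _ => star_mul_self_nonneg _
  ext i j
  have h2 := (Finset.sum_eq_zero_iff_of_nonneg h1).mp h i (Finset.mem_univ i)
  have h3 := (Finset.sum_eq_zero_iff_of_nonneg
    (fun j _ => star_mul_self_nonneg (A i j))).mp h2 j (Finset.mem_univ j)
  have h4 : A i j * star (A i j) = 0 := by rw [mul_comm] at h3; exact h3
  rw [Complex.star_def, Complex.mul_conj] at h4
  exact_mod_cast Complex.normSq_eq_zero.mp (by exact_mod_cast h4)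

lemma trace_conjTranspose_mul_comm (A B : Matrix m m ℂ) :
    (Aᴴ * B).trace = star ((Bᴴ * A).trace) := by
  rw [← Matrix.trace_conjTranspose, Matrix.conjTranspose_mul, Matrix.conjTranspose_conjTranspose]

/-- The linear equivalence between matrices and Euclidean space. -/
noncomputable def matEquiv : Matrix m m ℂ ≃ₗ[ℂ] EuclideanSpace ℂ (m × m) where
  toFun x := WithLp.toLp 2 (fun p : m × m => x p.1 p.2)
  map_add' _ _ := rfl
  map_smul' _ _ := rfl
  invFun v := Matrix.of fun i j => v (i, j)
  left_inv _ := rfl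
  right_inv _ := rfl

lemma matEquiv_inner (a b : Matrix m m ℂ) :
    (inner ℂ (matEquiv a) (matEquiv b) : ℂ) = (aᴴ * b).trace := by
  rw [trace_conjTranspose_mul]
  simp [PiLp.inner_apply, matEquiv, RCLike.inner_apply, Fintype.sum_prod_type]
  exact Finset.sum_congr rfl fun i _ => Finset.sum_congr rfl fun j _ => mul_comm _ _

variable (T : StarSubalgebra ℂ (Matrix m m ℂ))

/-- The image of `T` in Euclidean space. -/
noncomputable def msub : Submodule ℂ (EuclideanSpace ℂ (m × m)) :=
  Submodule.map (matEquiv.toLinearMap) (Subalgebra.toSubmodule T.toSubalgebra)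

lemma mem_msub {s : Matrix m m ℂ} (hs : s ∈ T) : matEquiv s ∈ msub T :=
  Submodule.mem_map_of_mem (by exact hs)

/-- Hilbert–Schmidt orthogonal projection onto a star-subalgebra. -/
noncomputable def sproj (x : Matrix m m ℂ) : Matrix m m ℂ :=
  matEquiv.symm ((msub T).orthogonalProjection (matEquiv x))

lemma sproj_mem (x : Matrix m m ℂ) : sproj T x ∈ T := by
  have hmem : ((msub T).orthogonalProjection (matEquiv x) : EuclideanSpace ℂ (m × m)) ∈ msub T :=
    Submodule.coe_mem _
  obtain ⟨s, hs, heq⟩ := hmem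
  have : sproj T x = s := by
    rw [sproj, ← heq]
    exact matEquiv.symm_apply_apply s
  rw [this]; exact hs

lemma sproj_orth (x : Matrix m m ℂ) {s : Matrix m m ℂ} (hs : s ∈ T) :
    (sᴴ * (x - sproj T x)).trace = 0 := by
  have h : inner ℂ (matEquiv x - ((msub T).orthogonalProjection (matEquiv x) :
      EuclideanSpace ℂ (m × m))) (matEquiv s) = 0 :=
    Submodule.starProjection_inner_eq_zero (K := msub T) _ _ (mem_msub T hs)
  have h2 : matEquiv (x - sproj T x) =
      matEquiv x - ((msub T).orthogonalProjection (matEquiv x) : EuclideanSpace ℂ (m × m)) := by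
    rw [map_sub, sproj, matEquiv.apply_symm_apply]
  have h3 := matEquiv_inner (x - sproj T x) s
  rw [h2, h] at h3
  rw [trace_conjTranspose_mul_comm, ← h3, star_zero]

lemma sproj_add (x y : Matrix m m ℂ) : sproj T (x + y) = sproj T x + sproj T y := by
  simp [sproj, map_add]

lemma sproj_smul (z : ℂ) (x : Matrix m m ℂ) : sproj T (z • x) = z • sproj T x := by
  simp [sproj]

lemma sproj_eq_of (x y : Matrix m m ℂ) (hy : y ∈ T)
    (horth : ∀ s ∈ T, (sᴴ * (x - y)).trace = 0) : sproj T x = y := by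
  have hdT : sproj T x - y ∈ T := sub_mem (sproj_mem T x) hy
  have key : ((sproj T x - y)ᴴ * (sproj T x - y)).trace = 0 := by
    have h1 : ((sproj T x - y)ᴴ * (x - y)).trace = 0 := horth _ hdT
    have h2 : ((sproj T x - y)ᴴ * (x - sproj T x)).trace = 0 := sproj_orth T x hdT
    have h3 : sproj T x - y = (x - y) - (x - sproj T x) := by abel
    nth_rewrite 2 [h3]
    rw [Matrix.mul_sub, Matrix.trace_sub, h1, h2, sub_zero]
  exact sub_eq_zero.mp (eq_zero_of_trace_conjTranspose_mul_self key)

lemma sproj_fix {s : Matrix m m ℂ} (hs : s ∈ T) : sproj T s = s :=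
  sproj_eq_of T s s hs (by intro c _; simp)

lemma sproj_trace {c : Matrix m m ℂ} (hc : c ∈ T) (x : Matrix m m ℂ) :
    (c * sproj T x).trace = (c * x).trace := by
  have h := sproj_orth T x (star_mem hc)
  rw [Matrix.star_eq_conjTranspose, Matrix.conjTranspose_conjTranspose,
    Matrix.mul_sub, Matrix.trace_sub, sub_eq_zero] at h
  exact h.symm

lemma sproj_star (x : Matrix m m ℂ) : sproj T xᴴ = (sproj T x)ᴴ := by
  refine sproj_eq_of T xᴴ (sproj T x)ᴴ (by
    simpa [Matrix.star_eq_conjTranspose] using star_mem (sproj_mem T x)) (fun s hs => ?_)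
  have : xᴴ - (sproj T x)ᴴ = (x - sproj T x)ᴴ := by rw [Matrix.conjTranspose_sub]
  rw [this, ← Matrix.conjTranspose_mul, Matrix.trace_conjTranspose]
  have h := sproj_orth T x (star_mem hs)
  rw [Matrix.star_eq_conjTranspose, Matrix.conjTranspose_conjTranspose] at h
  have : (x - sproj T x) * s = ((x - sproj T x) * s) := rfl
  calc star (((x - sproj T x) * s).trace)
      = star ((s * (x - sproj T x)).trace) := by rw [Matrix.trace_mul_comm]
    _ = 0 := by rw [h, star_zero]

lemma sproj_bimod {c₁ c₂ : Matrix m m ℂ} (hc₁ : c₁ ∈ T) (hc₂ : c₂ ∈ T) (x : Matrix m m ℂ) :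
    sproj T (c₁ * x * c₂) = c₁ * sproj T x * c₂ := by
  refine sproj_eq_of T _ _ (mul_mem (mul_mem hc₁ (sproj_mem T x)) hc₂) (fun s hs => ?_)
  have h1 : c₁ * x * c₂ - c₁ * sproj T x * c₂ = c₁ * (x - sproj T x) * c₂ := by
    rw [Matrix.mul_sub, Matrix.sub_mul]
  rw [h1]
  rw [show sᴴ * (c₁ * (x - sproj T x) * c₂) = (sᴴ * (c₁ * (x - sproj T x))) * c₂ by
    simp only [Matrix.mul_assoc]]
  rw [Matrix.trace_mul_comm]
  rw [show c₂ * (sᴴ * (c₁ * (x - sproj T x))) = (c₁ᴴ * s * c₂ᴴ)ᴴ * (x - sproj T x) by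
    simp only [Matrix.conjTranspose_mul, Matrix.conjTranspose_conjTranspose, Matrix.mul_assoc]]
  exact sproj_orth T x (mul_mem (mul_mem (by simpa [Matrix.star_eq_conjTranspose] using star_mem hc₁) hs)
    (by simpa [Matrix.star_eq_conjTranspose] using star_mem hc₂))

lemma sproj_adjoint (a x : Matrix m m ℂ) :
    (aᴴ * sproj T x).trace = ((sproj T a)ᴴ * x).trace := by
  have e1 : (aᴴ * sproj T x).trace = ((sproj T a)ᴴ * sproj T x).trace := by
    have h : ((a - sproj T a)ᴴ * sproj T x).trace = 0 := by
      rw [trace_conjTranspose_mul_comm, sproj_orth T a (sproj_mem T x), star_zero]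
    rw [Matrix.conjTranspose_sub, Matrix.sub_mul, Matrix.trace_sub, sub_eq_zero] at h
    exact h
  have e2 : ((sproj T a)ᴴ * x).trace = ((sproj T a)ᴴ * sproj T x).trace := by
    have h : ((sproj T a)ᴴ * (x - sproj T x)).trace = 0 := sproj_orth T x (sproj_mem T a)
    rw [Matrix.mul_sub, Matrix.trace_sub, sub_eq_zero] at h
    exact h
  rw [e1, e2]
set_option linter.unusedSectionVars false

variable {m : Type*} [Fintype m] [DecidableEq m]
variable {y : Matrix m m ℂ}

/-- Functional calculus for Hermitian matrices. -/
noncomputable def fc (hy : y.IsHermitian) (f : ℝ → ℝ) : Matrix m m ℂ :=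
  (hy.eigenvectorUnitary : Matrix m m ℂ) *
    diagonal (fun i => ((f (hy.eigenvalues i) : ℝ) : ℂ)) *
    (star hy.eigenvectorUnitary : Matrix m m ℂ)

lemma fc_mul (hy : y.IsHermitian) (f g : ℝ → ℝ) :
    fc hy f * fc hy g = fc hy (fun t => f t * g t) := by
  have hU : (star hy.eigenvectorUnitary : Matrix m m ℂ) *
      (hy.eigenvectorUnitary : Matrix m m ℂ) = 1 :=
    Matrix.mem_unitaryGroup_iff'.mp hy.eigenvectorUnitary.2
  rw [fc, fc, fc]
  simp only [Matrix.mul_assoc]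
  rw [← Matrix.mul_assoc (star hy.eigenvectorUnitary : Matrix m m ℂ)
    (hy.eigenvectorUnitary : Matrix m m ℂ), hU, Matrix.one_mul,
    ← Matrix.mul_assoc (diagonal _) (diagonal _), diagonal_mul_diagonal]
  have : (fun i => ((f (hy.eigenvalues i) : ℝ) : ℂ) * ((g (hy.eigenvalues i) : ℝ) : ℂ)) =
      fun i => ((f (hy.eigenvalues i) * g (hy.eigenvalues i) : ℝ) : ℂ) := by
    funext i; push_cast; ring
  rw [this]

lemma fc_congr (hy : y.IsHermitian) {f g : ℝ → ℝ}
    (h : ∀ i, f (hy.eigenvalues i) = g (hy.eigenvalues i)) : fc hy f = fc hy g := by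
  have : (fun i => ((f (hy.eigenvalues i) : ℝ) : ℂ)) =
      fun i => ((g (hy.eigenvalues i) : ℝ) : ℂ) := funext fun i => by rw [h i]
  rw [fc, fc, this]

lemma fc_one (hy : y.IsHermitian) : fc hy (fun _ => 1) = 1 := by
  have hU : (hy.eigenvectorUnitary : Matrix m m ℂ) *
      (star hy.eigenvectorUnitary : Matrix m m ℂ) = 1 :=
    Matrix.mem_unitaryGroup_iff.mp hy.eigenvectorUnitary.2
  simp [fc, hU]

lemma fc_zero (hy : y.IsHermitian) : fc hy (fun _ => 0) = 0 := by
  simp [fc]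

lemma fc_sub (hy : y.IsHermitian) (f g : ℝ → ℝ) :
    fc hy f - fc hy g = fc hy (fun t => f t - g t) := by
  rw [fc, fc, fc, ← Matrix.sub_mul, ← Matrix.mul_sub, diagonal_sub]
  push_cast
  rfl

lemma fc_id (hy : y.IsHermitian) : fc hy (fun t => t) = y := by
  rw [fc]
  exact hy.spectral_theorem.symm

lemma fc_conjTranspose (hy : y.IsHermitian) (f : ℝ → ℝ) : (fc hy f)ᴴ = fc hy f := by
  rw [fc, Matrix.conjTranspose_mul, Matrix.conjTranspose_mul, Matrix.diagonal_conjTranspose]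
  simp only [← Matrix.star_eq_conjTranspose, star_star]
  have : star (fun i => ((f (hy.eigenvalues i) : ℝ) : ℂ)) =
      fun i => ((f (hy.eigenvalues i) : ℝ) : ℂ) := by
    funext i; simp [Pi.star_apply, Complex.conj_ofReal]
  rw [this]
  simp only [Matrix.mul_assoc]

lemma fc_posSemidef (hy : y.IsHermitian) {f : ℝ → ℝ}
    (h : ∀ i, 0 ≤ f (hy.eigenvalues i)) : (fc hy f).PosSemidef := by
  have hd : (diagonal (fun i => ((f (hy.eigenvalues i) : ℝ) : ℂ))).PosSemidef :=
    Matrix.posSemidef_diagonal_iff.mpr fun i => by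
      exact_mod_cast h i
  have := hd.mul_mul_conjTranspose_same (hy.eigenvectorUnitary : Matrix m m ℂ)
  rw [fc]
  simpa [Matrix.star_eq_conjTranspose] using this

lemma aeval_mem {A' : Type*} [Ring A'] [Algebra ℂ A'] (T : Subalgebra ℂ A')
    {a : A'} (ha : a ∈ T) (q : ℂ[X]) : Polynomial.aeval a q ∈ T := by
  have h1 : Algebra.adjoin ℂ {a} ≤ T := Algebra.adjoin_le (Set.singleton_subset_iff.mpr ha)
  apply h1
  rw [Algebra.adjoin_singleton_eq_range_aeval]
  exact ⟨q, rfl⟩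

/-- Conjugation by the eigenvector unitary, as an algebra homomorphism. -/
noncomputable def conjAlgHom (hy : y.IsHermitian) :
    Matrix m m ℂ →ₐ[ℂ] Matrix m m ℂ where
  toFun x := (hy.eigenvectorUnitary : Matrix m m ℂ) * x * (star hy.eigenvectorUnitary : Matrix m m ℂ)
  map_one' := by
    simp only [Matrix.mul_one]
    exact Matrix.mem_unitaryGroup_iff.mp hy.eigenvectorUnitary.2
  map_mul' a b := by
    have hU : (star hy.eigenvectorUnitary : Matrix m m ℂ) *
        (hy.eigenvectorUnitary : Matrix m m ℂ) = 1 :=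
      Matrix.mem_unitaryGroup_iff'.mp hy.eigenvectorUnitary.2
    simp only [Matrix.mul_assoc]
    rw [← Matrix.mul_assoc (star hy.eigenvectorUnitary : Matrix m m ℂ), hU, Matrix.one_mul]
  map_zero' := by simp
  map_add' a b := by simp [Matrix.mul_add, Matrix.add_mul]
  commutes' r := by
    have hU : (hy.eigenvectorUnitary : Matrix m m ℂ) *
        (star hy.eigenvectorUnitary : Matrix m m ℂ) = 1 :=
      Matrix.mem_unitaryGroup_iff.mp hy.eigenvectorUnitary.2
    simp only [Algebra.algebraMap_eq_smul_one]
    rw [Matrix.mul_smul, Matrix.mul_one, Matrix.smul_mul, hU]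

lemma fc_eq_aeval (hy : y.IsHermitian) (f : ℝ → ℝ) :
    ∃ q : ℂ[X], fc hy f = Polynomial.aeval y q := by
  classical
  set nodes : Finset ℂ := Finset.univ.image (fun i => ((hy.eigenvalues i : ℝ) : ℂ)) with hnodes
  set r : ℂ → ℂ := fun z => ((f z.re : ℝ) : ℂ) with hr
  refine ⟨Lagrange.interpolate nodes id r, ?_⟩
  have heval : ∀ i, Polynomial.eval ((hy.eigenvalues i : ℝ) : ℂ)
      (Lagrange.interpolate nodes id r) = ((f (hy.eigenvalues i) : ℝ) : ℂ) := by
    intro i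
    have hmem : ((hy.eigenvalues i : ℝ) : ℂ) ∈ nodes := by
      rw [hnodes]; exact Finset.mem_image_of_mem _ (Finset.mem_univ i)
    have := Lagrange.eval_interpolate_at_node r (Set.injOn_id _) hmem
    simpa [hr] using this
  have hy_eq : y = conjAlgHom hy (diagonal (fun i => ((hy.eigenvalues i : ℝ) : ℂ))) :=
    hy.spectral_theorem
  have h5 : Polynomial.aeval y (Lagrange.interpolate nodes id r) =
      Polynomial.aeval (conjAlgHom hy (diagonal (fun i => ((hy.eigenvalues i : ℝ) : ℂ))))
        (Lagrange.interpolate nodes id r) := by rw [← hy_eq]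
  rw [h5, aeval_algHom_apply]
  have hdiag : Polynomial.aeval (diagonal (fun i => ((hy.eigenvalues i : ℝ) : ℂ)))
      (Lagrange.interpolate nodes id r) =
      diagonal (fun i => ((f (hy.eigenvalues i) : ℝ) : ℂ)) := by
    have h1 : diagonal (fun i => ((hy.eigenvalues i : ℝ) : ℂ)) =
        Matrix.diagonalAlgHom ℂ (fun i => ((hy.eigenvalues i : ℝ) : ℂ)) := rfl
    rw [h1, aeval_algHom_apply]
    have h2 : Polynomial.aeval (fun i => ((hy.eigenvalues i : ℝ) : ℂ))
        (Lagrange.interpolate nodes id r) =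
        fun i => ((f (hy.eigenvalues i) : ℝ) : ℂ) := by
      funext i
      have h3 := aeval_algHom_apply (Pi.evalAlgHom ℂ (fun _ : m => ℂ) i)
        (fun i => ((hy.eigenvalues i : ℝ) : ℂ)) (Lagrange.interpolate nodes id r)
      simp only [Pi.evalAlgHom_apply] at h3
      rw [← h3]
      have h4 : Polynomial.aeval ((hy.eigenvalues i : ℝ) : ℂ)
          (Lagrange.interpolate nodes id r) =
          Polynomial.eval ((hy.eigenvalues i : ℝ) : ℂ) (Lagrange.interpolate nodes id r) := by
        rw [Polynomial.coe_aeval_eq_eval]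
      rw [h4]
      exact heval i
    rw [h2]
    rfl
  rw [hdiag]
  rfl

lemma fc_mem (T : StarSubalgebra ℂ (Matrix m m ℂ)) (hy : y.IsHermitian) (hyT : y ∈ T)
    (f : ℝ → ℝ) : fc hy f ∈ T := by
  obtain ⟨q, hq⟩ := fc_eq_aeval hy f
  rw [hq]
  exact aeval_mem T.toSubalgebra hyT q

section Positivity

variable {m : Type*} [Fintype m] [DecidableEq m]

lemma sproj_posSemidef (T : StarSubalgebra ℂ (Matrix m m ℂ)) {x : Matrix m m ℂ}
    (hx : x.PosSemidef) : (sproj T x).PosSemidef := by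
  have hyH : (sproj T x).IsHermitian := by
    have := sproj_star T x
    rw [hx.1.eq] at this
    exact this.symm
  have hyT : sproj T x ∈ T := sproj_mem T x
  set fp : ℝ → ℝ := fun t => Real.sqrt (max t 0) with hfp
  set fm : ℝ → ℝ := fun t => Real.sqrt (max (-t) 0) with hfm
  set v := fc hyH fp with hv
  set w := fc hyH fm with hw
  have hvT : v ∈ T := fc_mem T hyH hyT fp
  have hwT : w ∈ T := fc_mem T hyH hyT fm
  have hwv : w * v = 0 := by
    rw [hv, hw, fc_mul]
    have : ∀ i, fm (hyH.eigenvalues i) * fp (hyH.eigenvalues i) = 0 := by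
      intro i
      rcases le_total (hyH.eigenvalues i) 0 with h | h
      · have : fp (hyH.eigenvalues i) = 0 := by
          rw [hfp]; simp [max_eq_right h]
        rw [this, mul_zero]
      · have : fm (hyH.eigenvalues i) = 0 := by
          rw [hfm]; simp [max_eq_right (neg_nonpos.mpr h)]
        rw [this, zero_mul]
    rw [fc_congr hyH (g := fun _ => 0) this, fc_zero]
  have hdecomp : v * v - w * w = sproj T x := by
    rw [hv, hw, fc_mul, fc_mul, fc_sub]
    have : ∀ i, (fun t => fp t * fp t - fm t * fm t) (hyH.eigenvalues i) =
        (fun t => t) (hyH.eigenvalues i) := by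
      intro i
      simp only [hfp, hfm]
      rw [Real.mul_self_sqrt (le_max_right _ _), Real.mul_self_sqrt (le_max_right _ _)]
      rcases le_total (hyH.eigenvalues i) 0 with h | h
      · rw [max_eq_right h, max_eq_left (neg_nonneg.mpr h)]; ring
      · rw [max_eq_left h, max_eq_right (neg_nonpos.mpr h)]; ring
    rw [fc_congr hyH (g := fun t => t) this, fc_id]
  have hvH : vᴴ = v := fc_conjTranspose hyH fp
  have hwH : wᴴ = w := fc_conjTranspose hyH fm
  -- trace identities
  have h1 : ((w * w) * sproj T x).trace = ((w * w) * x).trace :=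
    sproj_trace T (mul_mem hwT hwT) x
  have h2 : (w * w) * (sproj T x) = - ((w * w) * (w * w)) := by
    rw [← hdecomp, Matrix.mul_sub]
    have : w * w * (v * v) = 0 := by
      rw [show w * w * (v * v) = w * (w * v) * v by simp only [Matrix.mul_assoc], hwv]
      simp
    rw [this, zero_sub]
  have h3 : 0 ≤ ((w * w)ᴴ * (w * w)).trace := trace_conjTranspose_mul_self_nonneg _
  have h4 : 0 ≤ ((w * x * w)).trace := by
    have hxw : (wᴴ * x * w).PosSemidef := hx.conjTranspose_mul_mul_same w
    rw [hwH] at hxw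
    exact hxw.trace_nonneg
  have h5 : ((w * w)ᴴ * (w * w)).trace = 0 := by
    have e1 : ((w * w)ᴴ * (w * w)).trace = - ((w * w) * x).trace := by
      rw [Matrix.conjTranspose_mul, hwH, ← Matrix.mul_assoc]
      have := h2
      calc (w * w * w * w).trace = ((w * w) * (w * w)).trace := by
            simp only [Matrix.mul_assoc]
        _ = - ((w * w) * sproj T x).trace := by rw [h2]; simp
        _ = - ((w * w) * x).trace := by rw [h1]
    have e2 : ((w * w) * x).trace = (w * x * w).trace := by
      rw [Matrix.trace_mul_comm, ← Matrix.mul_assoc, Matrix.trace_mul_comm, ← Matrix.mul_assoc]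
    rw [e2] at e1
    have : ((w * w)ᴴ * (w * w)).trace ≤ 0 := by rw [e1]; exact neg_nonpos.mpr h4
    exact le_antisymm this h3
  have hww : w * w = 0 := eq_zero_of_trace_conjTranspose_mul_self h5
  have : sproj T x = vᴴ * v := by rw [hvH, ← hdecomp, hww, sub_zero]
  rw [this]
  exact Matrix.posSemidef_conjTranspose_mul_self v

end Positivity

end TakesakiAux

namespace TakesakiAux

section CP

variable {m : Type*} [Fintype m] [DecidableEq m]

lemma isCP_conj (M : Matrix m m ℂ) : IsCP (fun x : Matrix m m ℂ => Mᴴ * x * M) := by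
  intro k X hX
  set A : Matrix (m × Fin k) (m × Fin k) ℂ :=
    Matrix.of fun (r p : m × Fin k) =>
      M r.1 p.1 * (if r.2 = p.2 then (1:ℂ) else 0) with hA
  have key : (Matrix.of fun p q : m × Fin k =>
      (Mᴴ * (Matrix.of fun i j => X (i, p.2) (j, q.2)) * M) p.1 q.1) = Aᴴ * X * A := by
    ext p q
    refine Eq.symm ?_
    have inner : ∀ s : m × Fin k, (Aᴴ * X) p s = ∑ i, star (M i p.1) * X (i, p.2) s := by
      intro s
      rw [Matrix.mul_apply, Fintype.sum_prod_type]
      refine Finset.sum_congr rfl fun i _ => ?_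
      rw [Finset.sum_eq_single p.2]
      · simp [hA]
      · intro a _ ha
        simp [hA, Matrix.conjTranspose_apply, ha]
      · intro h; exact absurd (Finset.mem_univ _) h
    have outer : ∀ j, (∑ b, (Aᴴ * X) p (j, b) * A (j, b) q) =
        (∑ i, star (M i p.1) * X (i, p.2) (j, q.2)) * M j q.1 := by
      intro j
      rw [Finset.sum_eq_single q.2]
      · rw [inner]
        simp [hA]
      · intro b _ hb
        simp [hA, hb]
      · intro h; exact absurd (Finset.mem_univ _) h
    calc (Aᴴ * X * A) p q
        = ∑ j, ∑ b, (Aᴴ * X) p (j, b) * A (j, b) q := by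
          rw [Matrix.mul_apply, Fintype.sum_prod_type]
      _ = ∑ j, (∑ i, star (M i p.1) * X (i, p.2) (j, q.2)) * M j q.1 :=
          Finset.sum_congr rfl fun j _ => outer j
      _ = (Mᴴ * (Matrix.of fun i j => X (i, p.2) (j, q.2)) * M) p.1 q.1 := by
          rw [Matrix.mul_apply]
          refine Finset.sum_congr rfl fun j _ => ?_
          rw [Matrix.mul_apply]
          refine congrArg (· * M j q.1) ?_
          refine Finset.sum_congr rfl fun i _ => ?_
          rw [Matrix.conjTranspose_apply]
          rfl
  rw [key]
  exact hX.conjTranspose_mul_mul_same A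

lemma isCP_comp {Φ Ψ : Matrix m m ℂ → Matrix m m ℂ}
    (hΦ : IsCP Φ) (hΨ : IsCP Ψ) : IsCP (fun x => Φ (Ψ x)) := by
  intro k M hM
  exact hΦ k _ (hΨ k M hM)

lemma isCP_congr {Φ Ψ : Matrix m m ℂ → Matrix m m ℂ} (h : ∀ x, Φ x = Ψ x)
    (hΦ : IsCP Φ) : IsCP Ψ := by
  have : Φ = Ψ := funext h
  rwa [← this]

set_option maxHeartbeats 1000000 in
/-- The star-subalgebra of block matrices all of whose blocks lie in `T`. -/
def blockSub (T : StarSubalgebra ℂ (Matrix m m ℂ)) (k : ℕ) :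
    StarSubalgebra ℂ (Matrix (m × Fin k) (m × Fin k) ℂ) where
  carrier := {M | ∀ a b : Fin k, (Matrix.of fun i j => M (i,a) (j,b)) ∈ T}
  zero_mem' := by
    intro a b
    have : (Matrix.of fun i j => (0 : Matrix (m × Fin k) (m × Fin k) ℂ) (i,a) (j,b)) =
        (0 : Matrix m m ℂ) := by ext i j; simp
    rw [this]; exact zero_mem _
  add_mem' := by
    intro X Y hX hY a b
    have : (Matrix.of fun i j => (X + Y) (i,a) (j,b)) =
        (Matrix.of fun i j => X (i,a) (j,b)) + (Matrix.of fun i j => Y (i,a) (j,b)) := by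
      ext i j; simp
    rw [this]; exact add_mem (hX a b) (hY a b)
  one_mem' := by
    intro a b
    have : (Matrix.of fun i j => (1 : Matrix (m × Fin k) (m × Fin k) ℂ) (i,a) (j,b)) =
        if a = b then (1 : Matrix m m ℂ) else 0 := by
      ext i j
      by_cases hab : a = b <;>
        simp [Matrix.one_apply, Prod.ext_iff, hab]
    rw [this]
    split
    · exact one_mem _
    · exact zero_mem _
  mul_mem' := by
    intro X Y hX hY a b
    have : (Matrix.of fun i j => (X * Y) (i,a) (j,b)) =
        ∑ c : Fin k, (Matrix.of fun i l => X (i,a) (l,c)) * (Matrix.of fun l j => Y (l,c) (j,b)) := by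
      ext i j
      simp only [Matrix.of_apply, Matrix.mul_apply, Fintype.sum_prod_type,
        Finset.sum_apply, Matrix.sum_apply]
      rw [Finset.sum_comm]
    rw [this]
    exact sum_mem fun c _ => mul_mem (hX a c) (hY c b)
  algebraMap_mem' := by
    intro r a b
    have : (Matrix.of fun i j => (algebraMap ℂ (Matrix (m × Fin k) (m × Fin k) ℂ) r) (i,a) (j,b)) =
        if a = b then algebraMap ℂ (Matrix m m ℂ) r else 0 := by
      ext i j
      by_cases hab : a = b <;>
        simp [Matrix.algebraMap_matrix_apply, Prod.ext_iff, hab]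
    rw [this]
    split
    · exact algebraMap_mem _ r
    · exact zero_mem _
  star_mem' := by
    intro X hX a b
    have : (Matrix.of fun i j => (star X) (i,a) (j,b)) =
        star (Matrix.of fun i j => X (i,b) (j,a)) := by
      ext i j
      simp [Matrix.conjTranspose_apply]
    rw [this]
    exact star_mem (hX b a)

set_option maxHeartbeats 2000000 in
lemma sproj_block (T : StarSubalgebra ℂ (Matrix m m ℂ)) (k : ℕ)
    (M : Matrix (m × Fin k) (m × Fin k) ℂ) :
    sproj (blockSub T k) M =
      Matrix.of fun p q => sproj T (Matrix.of fun i j => M (i, p.2) (j, q.2)) p.1 q.1 := by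
  apply sproj_eq_of
  · intro a b
    have heq : (Matrix.of fun i j =>
        (Matrix.of fun p q :  m × Fin k =>
          sproj T (Matrix.of fun i' j' => M (i', p.2) (j', q.2)) p.1 q.1) (i,a) (j,b)) =
        sproj T (Matrix.of fun i j => M (i,a) (j,b)) := by
      ext i j
      simp only [Matrix.of_apply]
    rw [heq]
    exact sproj_mem T _
  · intro s hs
    rw [trace_conjTranspose_mul]
    have key : ∀ a b : Fin k,
        (∑ i, ∑ j, star (s (i,a) (j,b)) *
          ((Matrix.of fun i j => M (i,a) (j,b)) -
            sproj T (Matrix.of fun i j => M (i,a) (j,b))) i j) = 0 := by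
      intro a b
      have h := sproj_orth T (Matrix.of fun i j => M (i,a) (j,b)) (hs a b)
      rw [trace_conjTranspose_mul] at h
      exact h
    calc ∑ p : m × Fin k, ∑ q : m × Fin k, star (s p q) *
          (M - Matrix.of fun p q : m × Fin k =>
            sproj T (Matrix.of fun i j => M (i, p.2) (j, q.2)) p.1 q.1) p q
        = ∑ i, ∑ a, ∑ j, ∑ b, star (s (i,a) (j,b)) *
            ((Matrix.of fun i j => M (i,a) (j,b)) -
              sproj T (Matrix.of fun i j => M (i,a) (j,b))) i j := by
          rw [Fintype.sum_prod_type]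
          refine Finset.sum_congr rfl fun i _ => ?_
          refine Finset.sum_congr rfl fun a _ => ?_
          rw [Fintype.sum_prod_type]
          refine Finset.sum_congr rfl fun j _ => ?_
          refine Finset.sum_congr rfl fun b _ => ?_
          simp [Matrix.sub_apply, Matrix.of_apply]
      _ = ∑ a, ∑ i, ∑ b, ∑ j, star (s (i,a) (j,b)) *
            ((Matrix.of fun i j => M (i,a) (j,b)) -
              sproj T (Matrix.of fun i j => M (i,a) (j,b))) i j := by
          rw [Finset.sum_comm]
          refine Finset.sum_congr rfl fun a _ => ?_
          refine Finset.sum_congr rfl fun i _ => ?_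
          exact Finset.sum_comm
      _ = ∑ a, ∑ b, ∑ i, ∑ j, star (s (i,a) (j,b)) *
            ((Matrix.of fun i j => M (i,a) (j,b)) -
              sproj T (Matrix.of fun i j => M (i,a) (j,b))) i j := by
          refine Finset.sum_congr rfl fun a _ => ?_
          exact Finset.sum_comm
      _ = 0 := by
          refine Finset.sum_eq_zero fun a _ => ?_
          refine Finset.sum_eq_zero fun b _ => ?_
          exact key a b

lemma isCP_sproj (T : StarSubalgebra ℂ (Matrix m m ℂ)) : IsCP (sproj T) := by
  intro k M hM
  have h := sproj_posSemidef (blockSub T k) hM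
  rwa [sproj_block] at h

end CP

end TakesakiAux

namespace TakesakiAux

section Sqrt

variable {m : Type*} [Fintype m] [DecidableEq m] {A : Matrix m m ℂ}

lemma sqrt_eq_fc (hA : A.PosDef) :
    hA.posSemidef.sqrt = fc hA.posSemidef.1 Real.sqrt := rfl

lemma sqrt_mul_invfc (hA : A.PosDef) :
    hA.posSemidef.sqrt * fc hA.posSemidef.1 (fun t => (Real.sqrt t)⁻¹) = 1 := by
  rw [sqrt_eq_fc hA, fc_mul]
  have h : ∀ i, Real.sqrt (hA.posSemidef.1.eigenvalues i) *
      (Real.sqrt (hA.posSemidef.1.eigenvalues i))⁻¹ = (fun _ : ℝ => (1:ℝ)) (hA.posSemidef.1.eigenvalues i) := by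
    intro i
    exact mul_inv_cancel₀ (ne_of_gt (Real.sqrt_pos.mpr (hA.eigenvalues_pos i)))
  rw [fc_congr hA.posSemidef.1 (g := fun _ => 1) h, fc_one]

lemma invfc_mul_sqrt (hA : A.PosDef) :
    fc hA.posSemidef.1 (fun t => (Real.sqrt t)⁻¹) * hA.posSemidef.sqrt = 1 := by
  rw [sqrt_eq_fc hA, fc_mul]
  have h : ∀ i, (Real.sqrt (hA.posSemidef.1.eigenvalues i))⁻¹ *
      Real.sqrt (hA.posSemidef.1.eigenvalues i) = (fun _ : ℝ => (1:ℝ)) (hA.posSemidef.1.eigenvalues i) := by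
    intro i
    exact inv_mul_cancel₀ (ne_of_gt (Real.sqrt_pos.mpr (hA.eigenvalues_pos i)))
  rw [fc_congr hA.posSemidef.1 (g := fun _ => 1) h, fc_one]

lemma sqrt_inv_eq_fc (hA : A.PosDef) :
    (hA.posSemidef.sqrt)⁻¹ = fc hA.posSemidef.1 (fun t => (Real.sqrt t)⁻¹) :=
  Matrix.inv_eq_right_inv (sqrt_mul_invfc hA)

lemma sqrt_mul_sqrt_inv (hA : A.PosDef) :
    hA.posSemidef.sqrt * (hA.posSemidef.sqrt)⁻¹ = 1 := by
  rw [sqrt_inv_eq_fc hA]; exact sqrt_mul_invfc hA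

lemma sqrt_inv_mul_sqrt (hA : A.PosDef) :
    (hA.posSemidef.sqrt)⁻¹ * hA.posSemidef.sqrt = 1 := by
  rw [sqrt_inv_eq_fc hA]; exact invfc_mul_sqrt hA

lemma sqrt_inv_conjTranspose (hA : A.PosDef) :
    ((hA.posSemidef.sqrt)⁻¹)ᴴ = (hA.posSemidef.sqrt)⁻¹ := by
  rw [sqrt_inv_eq_fc hA]; exact fc_conjTranspose _ _

end Sqrt

end TakesakiAux

namespace Matrix.PosSemidef

lemma posSemidef_sqrt_s5 {m : Type*} [Fintype m] [DecidableEq m] {A : Matrix m m ℂ}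
    (hA : A.PosSemidef) : hA.sqrt.PosSemidef :=
  TakesakiAux.fc_posSemidef hA.1 (f := Real.sqrt) fun _ => Real.sqrt_nonneg _

lemma sqrt_mul_self_s5 {m : Type*} [Fintype m] [DecidableEq m] {A : Matrix m m ℂ}
    (hA : A.PosSemidef) : hA.sqrt * hA.sqrt = A := by
  show TakesakiAux.fc hA.1 Real.sqrt * TakesakiAux.fc hA.1 Real.sqrt = A
  rw [TakesakiAux.fc_mul, TakesakiAux.fc_congr hA.1 (g := fun t => t)
    (fun i => Real.mul_self_sqrt (hA.eigenvalues_nonneg i)), TakesakiAux.fc_id]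

end Matrix.PosSemidef

open TakesakiAux in
set_option maxHeartbeats 2000000 in
/-- Converse direction of Takesaki's theorem: if `ρ^{1/2} c ρ^{-1/2} = ρ_C^{1/2} c ρ_C^{-1/2}`
for every `c ∈ S`, then there exists a `ρ`-preserving conditional expectation onto `S`. -/
theorem modular_eq_imp_exists_rho_preserving_condExp
    {n : ℕ} (S : StarSubalgebra ℂ (Matrix (Fin n) (Fin n) ℂ))
    (ρ : Matrix (Fin n) (Fin n) ℂ) (hρ : ρ.PosDef) (hρtr : ρ.trace = 1)
    (ρC : Matrix (Fin n) (Fin n) ℂ) (hρCS : ρC ∈ S) (hρC : ρC.PosDef)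
    (hρCtr : ∀ c ∈ S, (ρC * c).trace = (ρ * c).trace)
    (hmod : ∀ c ∈ S,
      hρ.posSemidef.sqrt * c * (hρ.posSemidef.sqrt)⁻¹ =
        hρC.posSemidef.sqrt * c * (hρC.posSemidef.sqrt)⁻¹) :
    ∃ E : Matrix (Fin n) (Fin n) ℂ → Matrix (Fin n) (Fin n) ℂ,
      IsCondExpOn (S : Set (Matrix (Fin n) (Fin n) ℂ)) E ∧
      ∀ x, (ρ * E x).trace = (ρ * x).trace := by
  set B := hρ.posSemidef.sqrt with hBdef
  set C := hρC.posSemidef.sqrt with hCdef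
  have hBH : Bᴴ = B := hρ.posSemidef.posSemidef_sqrt_s5.1
  have hCH : Cᴴ = C := hρC.posSemidef.posSemidef_sqrt_s5.1
  have hBinvH : (B⁻¹)ᴴ = B⁻¹ := sqrt_inv_conjTranspose hρ
  have hCinvH : (C⁻¹)ᴴ = C⁻¹ := sqrt_inv_conjTranspose hρC
  have hBB : B * B = ρ := hρ.posSemidef.sqrt_mul_self_s5
  have hCC : C * C = ρC := hρC.posSemidef.sqrt_mul_self_s5
  have hBBi : B * B⁻¹ = 1 := sqrt_mul_sqrt_inv hρ
  have hBiB : B⁻¹ * B = 1 := sqrt_inv_mul_sqrt hρ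
  have hCCi : C * C⁻¹ = 1 := sqrt_mul_sqrt_inv hρC
  have hCiC : C⁻¹ * C = 1 := sqrt_inv_mul_sqrt hρC
  have hCS : C ∈ S := by
    rw [hCdef, sqrt_eq_fc hρC]; exact fc_mem S _ hρCS _
  have hCiS : C⁻¹ ∈ S := by
    rw [hCdef, sqrt_inv_eq_fc hρC]; exact fc_mem S _ hρCS _
  -- the adjoint form of the modular relation
  have hmod' : ∀ c ∈ S, B⁻¹ * c * B = C⁻¹ * c * C := by
    intro c hc
    have h := hmod (star c) (star_mem hc)
    have h2 := congrArg Matrix.conjTranspose h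
    rw [Matrix.conjTranspose_mul, Matrix.conjTranspose_mul, Matrix.conjTranspose_mul,
      Matrix.conjTranspose_mul] at h2
    simp only [Matrix.star_eq_conjTranspose, Matrix.conjTranspose_conjTranspose] at h2
    rw [hBH, hBinvH, hCH, hCinvH] at h2
    calc B⁻¹ * c * B = B⁻¹ * (c * B) := by rw [Matrix.mul_assoc]
      _ = C⁻¹ * (c * C) := h2
      _ = C⁻¹ * c * C := by rw [Matrix.mul_assoc]
  -- the projection maps ρ to ρC
  have hPρ : sproj S ρ = ρC := by
    apply sproj_eq_of S ρ ρC hρCS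
    intro s hs
    rw [Matrix.mul_sub, Matrix.trace_sub, sub_eq_zero, Matrix.trace_mul_comm,
      Matrix.trace_mul_comm sᴴ ρC]
    exact ((hρCtr sᴴ (by simpa [Matrix.star_eq_conjTranspose] using star_mem hs))).symm
  -- the projection maps C⁻¹ρC⁻¹ to 1
  have hPσ : sproj S (C⁻¹ * ρ * C⁻¹) = 1 := by
    apply sproj_eq_of S _ 1 (one_mem S)
    intro s hs
    rw [Matrix.mul_sub, Matrix.trace_sub, sub_eq_zero, Matrix.mul_one]
    have hsS : sᴴ ∈ S := by simpa [Matrix.star_eq_conjTranspose] using star_mem hs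
    have hc' : C⁻¹ * sᴴ * C⁻¹ ∈ S := mul_mem (mul_mem hCiS hsS) hCiS
    calc (sᴴ * (C⁻¹ * ρ * C⁻¹)).trace
        = (ρ * (C⁻¹ * sᴴ * C⁻¹)).trace := by
          rw [show sᴴ * (C⁻¹ * ρ * C⁻¹) = (sᴴ * C⁻¹ * ρ) * C⁻¹ by
            simp only [Matrix.mul_assoc], Matrix.trace_mul_comm]
          rw [show C⁻¹ * (sᴴ * C⁻¹ * ρ) = (C⁻¹ * sᴴ * C⁻¹) * ρ by
            simp only [Matrix.mul_assoc], Matrix.trace_mul_comm]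
      _ = (ρC * (C⁻¹ * sᴴ * C⁻¹)).trace := (hρCtr _ hc').symm
      _ = (sᴴ).trace := by
          rw [← hCC]
          rw [show C * C * (C⁻¹ * sᴴ * C⁻¹) = C * (C * C⁻¹) * sᴴ * C⁻¹ by
            simp only [Matrix.mul_assoc], hCCi, Matrix.mul_one, Matrix.trace_mul_comm,
            ← Matrix.mul_assoc, hCiC, Matrix.one_mul]
  refine ⟨fun x => C⁻¹ * sproj S (B * x * B) * C⁻¹, ⟨?_, ?_, ?_, ?_, ?_, ?_, ?_⟩, ?_⟩
  · -- additive
    intro x y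
    beta_reduce
    rw [show B * (x + y) * B = B * x * B + B * y * B by
      rw [Matrix.mul_add, Matrix.add_mul], sproj_add, Matrix.mul_add, Matrix.add_mul]
  · -- smul
    intro z x
    beta_reduce
    rw [show B * (z • x) * B = z • (B * x * B) by
      rw [Matrix.mul_smul, Matrix.smul_mul], sproj_smul, Matrix.mul_smul, Matrix.smul_mul]
  · -- unital
    beta_reduce
    rw [Matrix.mul_one, hBB, hPρ, ← hCC, show C⁻¹ * (C * C) * C⁻¹ = (C⁻¹ * C) * (C * C⁻¹) by
      simp only [Matrix.mul_assoc], hCiC, hCCi, Matrix.one_mul]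
  · -- completely positive
    refine isCP_congr (fun x => ?_)
      (isCP_comp (isCP_conj C⁻¹) (isCP_comp (isCP_sproj S) (isCP_conj B)))
    rw [hBH, hCinvH]
  · -- range
    intro x
    beta_reduce
    exact mul_mem (mul_mem hCiS (sproj_mem S _)) hCiS
  · -- fixes S
    intro c hc
    beta_reduce
    have hc' : c ∈ S := hc
    have h1 : B * c * B = (C * c * C⁻¹) * ρ := by
      rw [← hmod c hc', ← hBB]
      rw [show B * c * B⁻¹ * (B * B) = B * c * (B⁻¹ * B) * B by simp only [Matrix.mul_assoc],
        hBiB, Matrix.mul_one]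
    have hcc : C * c * C⁻¹ ∈ S := mul_mem (mul_mem hCS hc') hCiS
    rw [h1, show (C * c * C⁻¹) * ρ = (C * c * C⁻¹) * ρ * 1 by rw [Matrix.mul_one],
      sproj_bimod S hcc (one_mem S) ρ, hPρ, Matrix.mul_one, ← hCC]
    rw [show C⁻¹ * (C * c * C⁻¹ * (C * C)) * C⁻¹ =
      (C⁻¹ * C) * c * (C⁻¹ * C) * (C * C⁻¹) by simp only [Matrix.mul_assoc], hCiC, hCCi]
    rw [Matrix.mul_one, Matrix.one_mul, Matrix.mul_one]
  · -- bimodule property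
    intro c₁ hc₁ c₂ hc₂ x
    beta_reduce
    have hc₁' : c₁ ∈ S := hc₁
    have hc₂' : c₂ ∈ S := hc₂
    have h1 : B * (c₁ * x * c₂) * B = (C * c₁ * C⁻¹) * (B * x * B) * (C⁻¹ * c₂ * C) := by
      rw [← hmod c₁ hc₁', ← hmod' c₂ hc₂']
      rw [show B * c₁ * B⁻¹ * (B * x * B) * (B⁻¹ * c₂ * B) =
        B * c₁ * (B⁻¹ * B) * x * (B * B⁻¹) * c₂ * B by simp only [Matrix.mul_assoc],
        hBiB, hBBi, Matrix.mul_one, Matrix.mul_one]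
      simp only [Matrix.mul_assoc]
    have m1 : C * c₁ * C⁻¹ ∈ S := mul_mem (mul_mem hCS hc₁') hCiS
    have m2 : C⁻¹ * c₂ * C ∈ S := mul_mem (mul_mem hCiS hc₂') hCS
    rw [h1, sproj_bimod S m1 m2]
    rw [show C⁻¹ * (C * c₁ * C⁻¹ * sproj S (B * x * B) * (C⁻¹ * c₂ * C)) * C⁻¹ =
      (C⁻¹ * C) * c₁ * (C⁻¹ * sproj S (B * x * B) * C⁻¹) * c₂ * (C * C⁻¹) by
        simp only [Matrix.mul_assoc], hCiC, hCCi, Matrix.one_mul, Matrix.mul_one]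
  · -- ρ-preserving
    intro x
    beta_reduce
    have hσH : (C⁻¹ * ρ * C⁻¹)ᴴ = C⁻¹ * ρ * C⁻¹ := by
      rw [Matrix.conjTranspose_mul, Matrix.conjTranspose_mul, hCinvH, hρ.1.eq]
      simp only [Matrix.mul_assoc]
    have e1 : (ρ * (C⁻¹ * sproj S (B * x * B) * C⁻¹)).trace
        = ((C⁻¹ * ρ * C⁻¹) * sproj S (B * x * B)).trace := by
      rw [show ρ * (C⁻¹ * sproj S (B * x * B) * C⁻¹) =
        (ρ * C⁻¹ * sproj S (B * x * B)) * C⁻¹ by simp only [Matrix.mul_assoc],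
        Matrix.trace_mul_comm]
      rw [show C⁻¹ * (ρ * C⁻¹ * sproj S (B * x * B)) =
        (C⁻¹ * ρ * C⁻¹) * sproj S (B * x * B) by simp only [Matrix.mul_assoc]]
    have e2 := sproj_adjoint S (C⁻¹ * ρ * C⁻¹) (B * x * B)
    rw [hσH, hPσ] at e2
    have e3 : ((1 : Matrix (Fin n) (Fin n) ℂ)ᴴ * (B * x * B)).trace = (B * x * B).trace := by
      simp
    have e4 : (B * x * B).trace = (ρ * x).trace := by
      rw [Matrix.trace_mul_comm, ← Matrix.mul_assoc, hBB]
    exact e1.trans (e2.trans (e3.trans e4))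
end
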